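/- Spectral concentration of block-sampled Gram matrix: let V ∈ ℝ^{n×k} have orthonormal columns, partition [n] into G blocks with V_{(i)} = E_i^T V the i-th row-block of V, and sample g blocks i.i.d. with probabilities p_i = ||V_{(i)}||_F^2 / k. Let α = min_i ||V_{(i)}||_F^2/||V_{(i)}||_2^2 (over blocks with V_{(i)} ≠ 0). Then for any δ ∈ (0,1), with probability at least 1 − δ, ||I_k − V^T S S^T V||_2 ≤ k / (δ sqrt(α g)), where S is the block sampling/rescaling matrix. -/

import Mathlib

open Matrix Finset
open scoped Classical
noncomputable section
/-- Squared Frobenius norm. -/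
def frobSq {m n : Type*} [Fintype m] [Fintype n] (A : Matrix m n ℝ) : ℝ := ∑ i, ∑ j, (A i j)^2
/-- Frobenius norm. -/
def frob {m n : Type*} [Fintype m] [Fintype n] (A : Matrix m n ℝ) : ℝ := Real.sqrt (frobSq A)
/-- Spectral (operator) norm. -/
def specNorm {m n : Type*} [Fintype m] [Fintype n] [DecidableEq n] (A : Matrix m n ℝ) : ℝ :=
  ‖LinearMap.toContinuousLinearMap (Matrix.toEuclideanLin A)‖
/-- Moore-Penrose pseudoinverse, via the four Penrose conditions. -/
def IsPinv {m n : Type*} [Fintype m] [Fintype n] (M : Matrix m n ℝ) (P : Matrix n m ℝ) : Prop :=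
  M * P * M = M ∧ P * M * P = P ∧ (M * P)ᵀ = M * P ∧ (P * M)ᵀ = P * M

section auxx
open scoped Matrix.Norms.L2Operator
variable {m n : Type*} [Fintype m] [Fintype n] [DecidableEq n] [DecidableEq m]

lemma specNorm_eq_l2 (A : Matrix m n ℝ) : specNorm A = ‖A‖ := rfl

lemma frobSq_nonneg (A : Matrix m n ℝ) : 0 ≤ frobSq A :=
  Finset.sum_nonneg fun _ _ => Finset.sum_nonneg fun _ _ => sq_nonneg _

lemma frobSq_eq_zero_iff (A : Matrix m n ℝ) : frobSq A = 0 ↔ A = 0 := by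
  constructor
  · intro h
    ext i j
    have h1 : ∀ i ∈ (univ : Finset m), ∑ j, (A i j)^2 = 0 := by
      intro i _
      have := (Finset.sum_eq_zero_iff_of_nonneg (fun i _ => Finset.sum_nonneg fun _ _ => sq_nonneg _)).mp h
      exact this i (mem_univ i)
    have := (Finset.sum_eq_zero_iff_of_nonneg (fun j _ => sq_nonneg _)).mp (h1 i (mem_univ i)) j (mem_univ j)
    simpa using pow_eq_zero_iff (n := 2) (by norm_num) |>.mp this
  · intro h; subst h; simp [frobSq]

lemma euclid_norm_sq (v : EuclideanSpace ℝ m) : ‖v‖^2 = ∑ i, (v i)^2 := by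
  rw [EuclideanSpace.norm_eq, Real.sq_sqrt (Finset.sum_nonneg fun _ _ => sq_nonneg _)]
  simp [sq_abs]

lemma specNorm_nonneg (A : Matrix m n ℝ) : 0 ≤ specNorm A := norm_nonneg _

lemma specNorm_pos_of_ne_zero (A : Matrix m n ℝ) (h : A ≠ 0) : 0 < specNorm A := by
  rw [specNorm_eq_l2]
  exact norm_pos_iff.mpr (by simpa using h)

lemma specNorm_le_frob (A : Matrix m n ℝ) : specNorm A ≤ frob A := by
  have hfrob : 0 ≤ frob A := Real.sqrt_nonneg _
  refine ContinuousLinearMap.opNorm_le_bound _ hfrob ?_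
  intro x
  have hx : toEuclideanLin A x = (WithLp.equiv 2 (m → ℝ)).symm (A *ᵥ (WithLp.equiv 2 (n → ℝ)) x) := rfl
  rw [LinearMap.coe_toContinuousLinearMap']
  have hax : ‖toEuclideanLin A x‖^2 ≤ (frob A * ‖x‖)^2 := by
    have h1 : ‖toEuclideanLin A x‖^2 = ∑ i, ((A *ᵥ (WithLp.equiv 2 (n → ℝ)) x) i)^2 := by
      rw [euclid_norm_sq]; rfl
    rw [h1]
    have h2 : ∀ i, ((A *ᵥ (WithLp.equiv 2 (n → ℝ)) x) i)^2 ≤ (∑ j, (A i j)^2) * (∑ j, (x j)^2) := by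
      intro i
      exact Finset.sum_mul_sq_le_sq_mul_sq univ (fun j => A i j) (fun j => x j)
    calc ∑ i, ((A *ᵥ (WithLp.equiv 2 (n → ℝ)) x) i)^2
        ≤ ∑ i, (∑ j, (A i j)^2) * (∑ j, (x j)^2) := Finset.sum_le_sum fun i _ => h2 i
      _ = frobSq A * ∑ j, (x j)^2 := by rw [← Finset.sum_mul]; rfl
      _ = frobSq A * ‖x‖^2 := by rw [euclid_norm_sq]
      _ = (frob A * ‖x‖)^2 := by
          rw [mul_pow, frob, Real.sq_sqrt (frobSq_nonneg A)]
  have hb : 0 ≤ frob A * ‖x‖ := by positivity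
  nlinarith [norm_nonneg ((toEuclideanLin A) x)]


lemma specNorm_transpose (A : Matrix m n ℝ) : specNorm Aᵀ = specNorm A := by
  rw [specNorm_eq_l2, specNorm_eq_l2]
  have h : Aᵀ = Aᴴ := by ext i j; simp [conjTranspose_apply]
  rw [h, Matrix.l2_opNorm_conjTranspose]

lemma frobSq_smul (c : ℝ) (A : Matrix m n ℝ) : frobSq (c • A) = c^2 * frobSq A := by
  simp [frobSq, Finset.mul_sum, mul_pow]

/-- `‖AᵀA‖_F² ≤ ‖A‖₂² ‖A‖_F²`. -/
lemma frobSq_gram_le (A : Matrix m n ℝ) :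
    frobSq (Aᵀ * A) ≤ specNorm A ^ 2 * frobSq A := by
  have key : ∀ b : n, ∑ a, ((Aᵀ * A) a b)^2 ≤ specNorm A ^ 2 * ∑ i, (A i b)^2 := by
    intro b
    set v : EuclideanSpace ℝ m := (WithLp.equiv 2 (m → ℝ)).symm (fun i => A i b) with hv
    have h1 : ∑ a, ((Aᵀ * A) a b)^2 = ‖toEuclideanLin Aᵀ v‖^2 := by
      rw [euclid_norm_sq]
      refine Finset.sum_congr rfl fun a _ => ?_
      congr 1
    have h2 : ‖toEuclideanLin Aᵀ v‖ ≤ specNorm Aᵀ * ‖v‖ :=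
      (LinearMap.toContinuousLinearMap (toEuclideanLin Aᵀ)).le_opNorm v
    have h3 : ‖v‖^2 = ∑ i, (A i b)^2 := by rw [euclid_norm_sq]; rfl
    rw [h1, ← h3, specNorm_transpose] at *
    nlinarith [norm_nonneg (toEuclideanLin Aᵀ v), norm_nonneg v, specNorm_nonneg A]
  calc frobSq (Aᵀ * A) = ∑ b, ∑ a, ((Aᵀ * A) a b)^2 := Finset.sum_comm
    _ ≤ ∑ b, specNorm A ^ 2 * ∑ i, (A i b)^2 := Finset.sum_le_sum fun b _ => key b
    _ = specNorm A ^ 2 * frobSq A := by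
        rw [← Finset.mul_sum]; congr 1; exact Finset.sum_comm

end auxx

/-- Second moment of a sum of iid mean-zero samples. -/
lemma second_moment {G g : ℕ} (pr h : Fin G → ℝ) (hpr1 : ∑ i, pr i = 1)
    (hmean : ∑ i, pr i * h i = 0) :
    ∑ ω : Fin g → Fin G, (∏ t, pr (ω t)) * (∑ t, h (ω t))^2
      = g * ∑ i, pr i * (h i)^2 := by
  have step1 : ∀ ω : Fin g → Fin G, (∏ t, pr (ω t)) * (∑ t, h (ω t))^2
      = ∑ t : Fin g, ∑ t' : Fin g, ∏ s : Fin g,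
          (pr (ω s) * (if s = t then h (ω s) else 1) * (if s = t' then h (ω s) else 1)) := by
    intro ω
    rw [sq, Finset.sum_mul_sum]
    rw [Finset.mul_sum]
    refine Finset.sum_congr rfl fun t _ => ?_
    rw [Finset.mul_sum]
    refine Finset.sum_congr rfl fun t' _ => ?_
    rw [Finset.prod_mul_distrib, Finset.prod_mul_distrib,
      Finset.prod_ite_eq' univ t (fun s => h (ω s)),
      Finset.prod_ite_eq' univ t' (fun s => h (ω s))]
    simp [mul_assoc]
  simp_rw [step1]
  have swap : ∑ ω : Fin g → Fin G, ∑ t : Fin g, ∑ t' : Fin g, ∏ s : Fin g,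
          (pr (ω s) * (if s = t then h (ω s) else 1) * (if s = t' then h (ω s) else 1))
      = ∑ t : Fin g, ∑ t' : Fin g, ∑ ω : Fin g → Fin G, ∏ s : Fin g,
          (pr (ω s) * (if s = t then h (ω s) else 1) * (if s = t' then h (ω s) else 1)) := by
    rw [Finset.sum_comm]
    exact Finset.sum_congr rfl fun t _ => Finset.sum_comm
  rw [swap]
  have step2 : ∀ t t' : Fin g,
      ∑ ω : Fin g → Fin G, ∏ s : Fin g,
          (pr (ω s) * (if s = t then h (ω s) else 1) * (if s = t' then h (ω s) else 1))
      = if t = t' then ∑ i, pr i * (h i)^2 else 0 := by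
    intro t t'
    have := Finset.prod_univ_sum (t := fun _ : Fin g => (univ : Finset (Fin G)))
      (f := fun s i => pr i * (if s = t then h i else 1) * (if s = t' then h i else 1))
    rw [Fintype.piFinset_univ] at this
    rw [← this]
    by_cases htt : t = t'
    · subst htt
      have : ∀ s : Fin g, ∑ i, pr i * (if s = t then h i else 1) * (if s = t then h i else 1)
          = if s = t then ∑ i, pr i * (h i)^2 else 1 := by
        intro s
        by_cases hs : s = t <;> simp [hs, hpr1, sq, mul_assoc]
      rw [Finset.prod_congr rfl (fun s _ => this s), Finset.prod_ite_eq' univ t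
        (fun _ => ∑ i, pr i * (h i)^2)]
      simp
    · rw [if_neg htt]
      refine Finset.prod_eq_zero (Finset.mem_univ t) ?_
      simp only [if_pos rfl, if_neg htt]
      simpa [mul_comm] using hmean
  simp_rw [step2]
  simp [Finset.sum_ite_eq, Finset.card_univ, mul_comm]

/-- Variance inequality. -/
lemma var_le {G : ℕ} (pr f : Fin G → ℝ) (μ : ℝ) (h1 : ∑ i, pr i = 1)
    (h2 : ∑ i, pr i * f i = μ) :
    ∑ i, pr i * (f i - μ)^2 ≤ ∑ i, pr i * (f i)^2 := by
  have expand : ∀ i, pr i * (f i - μ)^2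
      = pr i * (f i)^2 - 2*μ*(pr i * f i) + μ^2 * pr i := by intro i; ring
  rw [Finset.sum_congr rfl (fun i _ => expand i)]
  rw [Finset.sum_add_distrib, Finset.sum_sub_distrib, ← Finset.mul_sum, ← Finset.mul_sum, h1, h2]
  nlinarith [sq_nonneg μ]


/-- Spectral concentration of the block-sampled Gram matrix. -/
theorem block_sampled_gram_concentration (n k G g : ℕ) (hg : 0 < g) (hk : 0 < k)
    (s : Fin G → ℕ)
    (Vblk : (i : Fin G) → Matrix (Fin (s i)) (Fin k) ℝ)
    (horth : (1 : Matrix (Fin k) (Fin k) ℝ) = ∑ i : Fin G, (Vblk i)ᵀ * Vblk i)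
    (pr : Fin G → ℝ) (hp : ∀ i, pr i = frobSq (Vblk i) / k)
    (hne : (Finset.univ.filter (fun i : Fin G => Vblk i ≠ 0)).Nonempty)
    (α : ℝ)
    (hα : α = (Finset.univ.filter (fun i : Fin G => Vblk i ≠ 0)).inf' hne
        (fun i => frobSq (Vblk i) / (specNorm (Vblk i))^2))
    (δ : ℝ) (hδ0 : 0 < δ) (hδ1 : δ < 1) :
    1 - δ ≤ ∑ ω ∈ Finset.univ.filter (fun ω : Fin g → Fin G =>
        specNorm ((1 : Matrix (Fin k) (Fin k) ℝ)
            - ∑ t, ((g : ℝ) * pr (ω t))⁻¹ • ((Vblk (ω t))ᵀ * Vblk (ω t)))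
          ≤ (k : ℝ) / (δ * Real.sqrt (α * (g : ℝ)))),
      ∏ t, pr (ω t) := by
  have hk' : (0:ℝ) < k := by exact_mod_cast hk
  have hg' : (0:ℝ) < g := by exact_mod_cast hg
  set F : Fin G → Matrix (Fin k) (Fin k) ℝ :=
    fun i => ((g : ℝ) * pr i)⁻¹ • ((Vblk i)ᵀ * Vblk i) with hF
  have hpr0 : ∀ i, 0 ≤ pr i := fun i => by
    rw [hp i]; exact div_nonneg (frobSq_nonneg _) hk'.le
  -- total Frobenius mass is k
  have htr : ∑ i, frobSq (Vblk i) = (k:ℝ) := by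
    have h0 := congrArg (fun M : Matrix (Fin k) (Fin k) ℝ => ∑ a, M a a) horth
    simp only [Matrix.sum_apply, Matrix.one_apply_eq, Finset.sum_const, Finset.card_univ,
      Fintype.card_fin, nsmul_eq_mul, mul_one, Matrix.mul_apply, Matrix.transpose_apply] at h0
    calc ∑ i, frobSq (Vblk i) = ∑ i, ∑ a, ∑ j, Vblk i j a * Vblk i j a := by
          refine Finset.sum_congr rfl fun i _ => ?_
          rw [frobSq, Finset.sum_comm]
          exact Finset.sum_congr rfl fun a _ => Finset.sum_congr rfl fun j _ => pow_two _
      _ = ∑ a, ∑ i, ∑ j, Vblk i j a * Vblk i j a := Finset.sum_comm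
      _ = (k:ℝ) := h0.symm
  have hpr1 : ∑ i, pr i = 1 := by
    simp_rw [hp]; rw [← Finset.sum_div, htr]; exact div_self hk'.ne'
  have hprV : ∀ i, pr i = 0 ↔ Vblk i = 0 := by
    intro i
    rw [hp i, div_eq_zero_iff]
    constructor
    · rintro (h | h)
      · exact (frobSq_eq_zero_iff _).mp h
      · exact absurd h (by positivity)
    · intro h; left; exact (frobSq_eq_zero_iff _).mpr h
  -- mean identity
  have hmean : ∀ a b, ∑ i, pr i * F i a b = (g:ℝ)⁻¹ * (1 : Matrix (Fin k) (Fin k) ℝ) a b := by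
    intro a b
    have hterm : ∀ i, pr i * F i a b = (g:ℝ)⁻¹ * (((Vblk i)ᵀ * Vblk i) a b) := by
      intro i
      by_cases hzi : pr i = 0
      · have hv0 : Vblk i = 0 := (hprV i).mp hzi
        simp [hF, hzi, hv0]
      · have hc : pr i * ((g:ℝ) * pr i)⁻¹ = (g:ℝ)⁻¹ := by
          field_simp
        calc pr i * F i a b = (pr i * ((g:ℝ) * pr i)⁻¹) * (((Vblk i)ᵀ * Vblk i) a b) := by
              simp [hF, Matrix.smul_apply, smul_eq_mul]; ring
          _ = (g:ℝ)⁻¹ * (((Vblk i)ᵀ * Vblk i) a b) := by rw [hc]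
    rw [Finset.sum_congr rfl fun i _ => hterm i, ← Finset.mul_sum]
    congr 1
    rw [horth]
    simp [Matrix.sum_apply]
  -- positivity of α and the α-bound
  have hαpos : 0 < α := by
    obtain ⟨i, hi, hieq⟩ := Finset.exists_mem_eq_inf' hne
      (fun i => frobSq (Vblk i) / (specNorm (Vblk i))^2)
    rw [hα, hieq]
    have hVne : Vblk i ≠ 0 := (Finset.mem_filter.mp hi).2
    have h1 : 0 < frobSq (Vblk i) :=
      lt_of_le_of_ne (frobSq_nonneg _) fun h => hVne ((frobSq_eq_zero_iff _).mp h.symm)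
    have h2 : 0 < specNorm (Vblk i) := specNorm_pos_of_ne_zero _ hVne
    positivity
  have hαle : ∀ i, Vblk i ≠ 0 → specNorm (Vblk i)^2 ≤ frobSq (Vblk i) / α := by
    intro i hi
    have hle : α ≤ frobSq (Vblk i) / specNorm (Vblk i)^2 := by
      rw [hα]
      exact Finset.inf'_le _ (Finset.mem_filter.mpr ⟨Finset.mem_univ i, hi⟩)
    have h2 : 0 < specNorm (Vblk i) := specNorm_pos_of_ne_zero _ hi
    rw [le_div_iff₀ (by positivity)] at hle
    rw [le_div_iff₀ hαpos]
    nlinarith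
  -- per-block second moment bound
  have hib : ∀ i, pr i * frobSq (F i) ≤ ((g:ℝ)⁻¹)^2 * ((k:ℝ) / α) * frobSq (Vblk i) := by
    intro i
    by_cases hzi : pr i = 0
    · have hv0 : Vblk i = 0 := (hprV i).mp hzi
      rw [hzi, hv0, zero_mul]
      have : frobSq (0 : Matrix (Fin (s i)) (Fin k) ℝ) = 0 := (frobSq_eq_zero_iff _).mpr rfl
      rw [this, mul_zero]
    · have hVne : Vblk i ≠ 0 := fun h => hzi ((hprV i).mpr h)
      have hfpos : 0 < frobSq (Vblk i) :=
        lt_of_le_of_ne (frobSq_nonneg _) fun h => hVne ((frobSq_eq_zero_iff _).mp h.symm)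
      have hprpos : 0 < pr i := (hpr0 i).lt_of_ne (Ne.symm hzi)
      have e1 : frobSq (F i) = (((g:ℝ) * pr i)⁻¹)^2 * frobSq ((Vblk i)ᵀ * Vblk i) := by
        rw [hF]; exact frobSq_smul _ _
      have e2 : frobSq ((Vblk i)ᵀ * Vblk i) ≤ specNorm (Vblk i)^2 * frobSq (Vblk i) :=
        frobSq_gram_le _
      have e3 : specNorm (Vblk i)^2 ≤ frobSq (Vblk i) / α := hαle i hVne
      have hX : frobSq ((Vblk i)ᵀ * Vblk i) ≤ (frobSq (Vblk i) / α) * frobSq (Vblk i) :=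
        e2.trans (mul_le_mul_of_nonneg_right e3 hfpos.le)
      have hkey : pr i * (((g:ℝ) * pr i)⁻¹)^2 = ((g:ℝ)^2 * pr i)⁻¹ := by
        field_simp
      have hinv : ((g:ℝ)^2 * pr i)⁻¹ = (k:ℝ) / ((g:ℝ)^2 * frobSq (Vblk i)) := by
        rw [hp i]; field_simp
      calc pr i * frobSq (F i)
          = (pr i * (((g:ℝ) * pr i)⁻¹)^2) * frobSq ((Vblk i)ᵀ * Vblk i) := by rw [e1]; ring
        _ = ((k:ℝ) / ((g:ℝ)^2 * frobSq (Vblk i))) * frobSq ((Vblk i)ᵀ * Vblk i) := by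
            rw [hkey, hinv]
        _ ≤ ((k:ℝ) / ((g:ℝ)^2 * frobSq (Vblk i))) * ((frobSq (Vblk i) / α) * frobSq (Vblk i)) :=
            mul_le_mul_of_nonneg_left hX (by positivity)
        _ = ((g:ℝ)⁻¹)^2 * ((k:ℝ) / α) * frobSq (Vblk i) := by
            field_simp
  have hsum_f : ∑ i, pr i * frobSq (F i) ≤ (k:ℝ)^2 / ((g:ℝ)^2 * α) := by
    calc ∑ i, pr i * frobSq (F i)
        ≤ ∑ i, ((g:ℝ)⁻¹)^2 * ((k:ℝ) / α) * frobSq (Vblk i) :=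
          Finset.sum_le_sum fun i _ => hib i
      _ = ((g:ℝ)⁻¹)^2 * ((k:ℝ) / α) * (k:ℝ) := by rw [← Finset.mul_sum, htr]
      _ = (k:ℝ)^2 / ((g:ℝ)^2 * α) := by field_simp
  -- probability facts
  have hw0 : ∀ ω : Fin g → Fin G, 0 ≤ ∏ t, pr (ω t) :=
    fun ω => Finset.prod_nonneg fun t _ => hpr0 _
  have hwsum : ∑ ω : Fin g → Fin G, ∏ t, pr (ω t) = 1 := by
    have hps := Finset.prod_univ_sum (t := fun _ : Fin g => (Finset.univ : Finset (Fin G)))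
      (f := fun _ i => pr i)
    rw [Fintype.piFinset_univ] at hps
    rw [← hps]
    simp [hpr1]
  -- expectation bound
  have hE : ∑ ω : Fin g → Fin G, (∏ t, pr (ω t)) *
      frobSq ((1 : Matrix (Fin k) (Fin k) ℝ) - ∑ t, F (ω t)) ≤ (k:ℝ)^2 / ((g:ℝ) * α) := by
    have hentry : ∀ (ω : Fin g → Fin G) (a b : Fin k),
        ((((1 : Matrix (Fin k) (Fin k) ℝ) - ∑ t, F (ω t)) a b))^2
        = (∑ t : Fin g, (F (ω t) a b - (g:ℝ)⁻¹ * (1 : Matrix (Fin k) (Fin k) ℝ) a b))^2 := by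
      intro ω a b
      have h1 : ∑ t : Fin g, (F (ω t) a b - (g:ℝ)⁻¹ * (1 : Matrix (Fin k) (Fin k) ℝ) a b)
          = (∑ t, F (ω t) a b) - (1 : Matrix (Fin k) (Fin k) ℝ) a b := by
        rw [Finset.sum_sub_distrib, Finset.sum_const, Finset.card_univ, Fintype.card_fin,
          nsmul_eq_mul]
        congr 1
        rw [← mul_assoc, mul_inv_cancel₀ hg'.ne', one_mul]
      have h2 : (((1 : Matrix (Fin k) (Fin k) ℝ) - ∑ t, F (ω t)) a b)
          = (1 : Matrix (Fin k) (Fin k) ℝ) a b - ∑ t, F (ω t) a b := by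
        simp [Matrix.sub_apply, Matrix.sum_apply]
      rw [h1, h2]; ring
    have key2 : ∀ a b : Fin k, ∑ ω : Fin g → Fin G, (∏ t, pr (ω t)) *
        (∑ t, (F (ω t) a b - (g:ℝ)⁻¹ * (1 : Matrix (Fin k) (Fin k) ℝ) a b))^2
        ≤ (g:ℝ) * ∑ i, pr i * (F i a b)^2 := by
      intro a b
      set μ := (g:ℝ)⁻¹ * (1 : Matrix (Fin k) (Fin k) ℝ) a b with hμ
      have hm0 : ∑ i, pr i * (F i a b - μ) = 0 := by
        simp_rw [mul_sub]
        rw [Finset.sum_sub_distrib, hmean a b, ← Finset.sum_mul, hpr1, one_mul, ← hμ, sub_self]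
      have hsm := second_moment (g := g) pr (fun i => F i a b - μ) hpr1 hm0
      rw [hsm]
      have hv := var_le pr (fun i => F i a b) μ hpr1 (hmean a b)
      exact mul_le_mul_of_nonneg_left hv hg'.le
    calc ∑ ω : Fin g → Fin G, (∏ t, pr (ω t)) *
            frobSq ((1 : Matrix (Fin k) (Fin k) ℝ) - ∑ t, F (ω t))
        = ∑ ω : Fin g → Fin G, ∑ a, ∑ b, (∏ t, pr (ω t)) *
            (∑ t, (F (ω t) a b - (g:ℝ)⁻¹ * (1 : Matrix (Fin k) (Fin k) ℝ) a b))^2 := by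
          refine Finset.sum_congr rfl fun ω _ => ?_
          rw [frobSq, Finset.mul_sum]
          refine Finset.sum_congr rfl fun a _ => ?_
          rw [Finset.mul_sum]
          exact Finset.sum_congr rfl fun b _ => by rw [hentry ω a b]
      _ = ∑ a, ∑ b, ∑ ω : Fin g → Fin G, (∏ t, pr (ω t)) *
            (∑ t, (F (ω t) a b - (g:ℝ)⁻¹ * (1 : Matrix (Fin k) (Fin k) ℝ) a b))^2 := by
          rw [Finset.sum_comm]
          exact Finset.sum_congr rfl fun a _ => Finset.sum_comm
      _ ≤ ∑ a, ∑ b, (g:ℝ) * ∑ i, pr i * (F i a b)^2 :=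
          Finset.sum_le_sum fun a _ => Finset.sum_le_sum fun b _ => key2 a b
      _ = (g:ℝ) * ∑ i, pr i * frobSq (F i) := by
          have h4 : ∑ i, pr i * frobSq (F i) = ∑ a, ∑ b, ∑ i, pr i * (F i a b)^2 := by
            calc ∑ i, pr i * frobSq (F i) = ∑ i, ∑ a, ∑ b, pr i * (F i a b)^2 := by
                  refine Finset.sum_congr rfl fun i _ => ?_
                  rw [frobSq, Finset.mul_sum]
                  exact Finset.sum_congr rfl fun a _ => by rw [Finset.mul_sum]
              _ = ∑ a, ∑ i, ∑ b, pr i * (F i a b)^2 := Finset.sum_comm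
              _ = ∑ a, ∑ b, ∑ i, pr i * (F i a b)^2 :=
                  Finset.sum_congr rfl fun a _ => Finset.sum_comm
          rw [h4, Finset.mul_sum]
          exact Finset.sum_congr rfl fun a _ => by rw [Finset.mul_sum]
      _ ≤ (g:ℝ) * ((k:ℝ)^2 / ((g:ℝ)^2 * α)) := mul_le_mul_of_nonneg_left hsum_f hg'.le
      _ = (k:ℝ)^2 / ((g:ℝ) * α) := by field_simp
  -- Markov / Chebyshev step
  have hαg : 0 < α * (g:ℝ) := by positivity
  have hsqrt : 0 < Real.sqrt (α * (g:ℝ)) := Real.sqrt_pos.mpr hαg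
  set ε := (k:ℝ) / (δ * Real.sqrt (α * (g:ℝ))) with hε
  have hεpos : 0 < ε := by rw [hε]; positivity
  have hε2 : ε^2 = (k:ℝ)^2 / (δ^2 * (α * (g:ℝ))) := by
    rw [hε, div_pow, mul_pow, Real.sq_sqrt hαg.le]
  show 1 - δ ≤ ∑ ω ∈ Finset.univ.filter (fun ω : Fin g → Fin G =>
      specNorm ((1 : Matrix (Fin k) (Fin k) ℝ) - ∑ t, F (ω t)) ≤ ε), ∏ t, pr (ω t)
  set p : (Fin g → Fin G) → Prop := fun ω =>
    specNorm ((1 : Matrix (Fin k) (Fin k) ℝ) - ∑ t, F (ω t)) ≤ ε with hpdef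
  have hsplit := Finset.sum_filter_add_sum_filter_not Finset.univ p
    (fun ω => ∏ t, pr (ω t))
  have hbad : ∑ ω ∈ Finset.univ.filter (fun ω => ¬ p ω), ∏ t, pr (ω t) ≤ δ := by
    have hchev : ∀ ω ∈ Finset.univ.filter (fun ω => ¬ p ω),
        ε^2 ≤ frobSq ((1 : Matrix (Fin k) (Fin k) ℝ) - ∑ t, F (ω t)) := by
      intro ω hω
      have hgt : ε < specNorm ((1 : Matrix (Fin k) (Fin k) ℝ) - ∑ t, F (ω t)) :=
        lt_of_not_ge (Finset.mem_filter.mp hω).2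
      have hle := specNorm_le_frob ((1 : Matrix (Fin k) (Fin k) ℝ) - ∑ t, F (ω t))
      have h9 : ε < Real.sqrt (frobSq ((1 : Matrix (Fin k) (Fin k) ℝ) - ∑ t, F (ω t))) :=
        lt_of_lt_of_le hgt hle
      exact ((Real.lt_sqrt hεpos.le).mp h9).le
    have h5 : ε^2 * ∑ ω ∈ Finset.univ.filter (fun ω => ¬ p ω), ∏ t, pr (ω t)
        ≤ ∑ ω : Fin g → Fin G, (∏ t, pr (ω t)) *
            frobSq ((1 : Matrix (Fin k) (Fin k) ℝ) - ∑ t, F (ω t)) := by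
      rw [Finset.mul_sum]
      calc ∑ ω ∈ Finset.univ.filter (fun ω => ¬ p ω), ε^2 * (∏ t, pr (ω t))
          ≤ ∑ ω ∈ Finset.univ.filter (fun ω => ¬ p ω), (∏ t, pr (ω t)) *
              frobSq ((1 : Matrix (Fin k) (Fin k) ℝ) - ∑ t, F (ω t)) :=
            Finset.sum_le_sum fun ω hω => by
              rw [mul_comm]
              exact mul_le_mul_of_nonneg_left (hchev ω hω) (hw0 ω)
        _ ≤ ∑ ω : Fin g → Fin G, (∏ t, pr (ω t)) *
              frobSq ((1 : Matrix (Fin k) (Fin k) ℝ) - ∑ t, F (ω t)) :=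
            Finset.sum_le_sum_of_subset_of_nonneg (Finset.filter_subset _ _)
              (fun ω _ _ => mul_nonneg (hw0 ω) (frobSq_nonneg _))
    have h6 := h5.trans hE
    have h7 : (k:ℝ)^2 / ((g:ℝ) * α) = ε^2 * δ^2 := by
      rw [hε2]; field_simp
    rw [h7] at h6
    have h8 : ∑ ω ∈ Finset.univ.filter (fun ω => ¬ p ω), ∏ t, pr (ω t) ≤ δ^2 := by
      have hε2pos : 0 < ε^2 := by positivity
      exact le_of_mul_le_mul_left h6 hε2pos
    nlinarith
  have hgood : ∑ ω ∈ Finset.univ.filter p, ∏ t, pr (ω t)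
      = 1 - ∑ ω ∈ Finset.univ.filter (fun ω => ¬ p ω), ∏ t, pr (ω t) := by
    rw [← hwsum, ← hsplit]; ring
  rw [hgood]
  linarith
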